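/- Let E be a finite-dimensional real normed vector space and C : E → E a C^∞ map such that the induced multiplication ∘ is associative with identity e. Then the operator ad e is a ∘-derivation: for all smooth vector fields Y, Z one has [e, Y∘Z] = [e,Y]∘Z + Y∘[e,Z]. -/

import Mathlib

open ContDiff

variable {E : Type*} [NormedAddCommGroup E] [NormedSpace ℝ E]

/-- Lie bracket of vector fields on a normed space:
`[X,Y](p) = (DY)(p)(X(p)) - (DX)(p)(Y(p))`. -/
noncomputable def lieB (X Y : E → E) : E → E :=
  fun p => fderiv ℝ Y p (X p) - fderiv ℝ X p (Y p)

/-- Multiplication on vector fields induced by a vector potential `C`: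
`(X ∘ Y)(p) = (D²C)(p)(X(p), Y(p))`. -/
noncomputable def mulC (C : E → E) (X Y : E → E) : E → E :=
  fun p => fderiv ℝ (fderiv ℝ C) p (X p) (Y p)

/-- The Hertling–Manin expression `P_X(Z,W) = [X, Z∘W] - [X,Z]∘W - Z∘[X,W]`. -/
noncomputable def hmP (C : E → E) (X Z W : E → E) : E → E :=
  fun p => lieB X (mulC C Z W) p - mulC C (lieB X Z) W p - mulC C Z (lieB X W) p

section HMAux

set_option linter.unusedSectionVars false
set_option maxHeartbeats 1000000

variable [FiniteDimensional ℝ E]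

theorem hm_le1 : (1 : WithTop ℕ∞) ≤ ∞ := WithTop.coe_le_coe.2 le_top
theorem hm_le2 : (2 : WithTop ℕ∞) ≤ ∞ := WithTop.coe_le_coe.2 le_top
theorem hm_le : (∞ : WithTop ℕ∞) + 1 ≤ ∞ := by norm_num
theorem hm_ne0 : (∞ : WithTop ℕ∞) ≠ 0 := by simp
theorem hm_le2' : minSmoothness ℝ 2 ≤ (∞ : WithTop ℕ∞) := by
  rw [minSmoothness_of_isRCLikeNormedField]; exact hm_le2

theorem hm_prodRule (C : E → E) (hC : ContDiff ℝ ∞ C) (X W : E → E) (q : E)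
    (hX : DifferentiableAt ℝ X q) (hW : DifferentiableAt ℝ W q) (x : E) :
    fderiv ℝ (fun r => fderiv ℝ (fderiv ℝ C) r (X r) (W r)) q x
      = fderiv ℝ (fderiv ℝ (fderiv ℝ C)) q x (X q) (W q)
        + fderiv ℝ (fderiv ℝ C) q (fderiv ℝ X q x) (W q)
        + fderiv ℝ (fderiv ℝ C) q (X q) (fderiv ℝ W q x) := by
  have hB : ContDiff ℝ ∞ (fderiv ℝ (fderiv ℝ C)) :=
    (hC.fderiv_right hm_le).fderiv_right hm_le
  have hBq : DifferentiableAt ℝ (fderiv ℝ (fderiv ℝ C)) q := (hB.differentiable hm_ne0 q)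
  have hg : DifferentiableAt ℝ (fun r => fderiv ℝ (fderiv ℝ C) r (X r)) q :=
    hBq.clm_apply hX
  rw [fderiv_clm_apply hg hW, fderiv_clm_apply hBq hX]
  simp only [ContinuousLinearMap.add_apply, ContinuousLinearMap.comp_apply,
    ContinuousLinearMap.flip_apply, map_add, ContinuousLinearMap.add_apply]
  abel

theorem hm_evalT (C : E → E) (hC : ContDiff ℝ ∞ C) (u v : E) (q x : E) :
    fderiv ℝ (fun r => fderiv ℝ (fderiv ℝ C) r u v) q x
      = fderiv ℝ (fderiv ℝ (fderiv ℝ C)) q x u v := by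
  have h := hm_prodRule C hC (fun _ => u) (fun _ => v) q (differentiableAt_const u)
    (differentiableAt_const v) x
  simpa using h

theorem hm_symB (C : E → E) (hC : ContDiff ℝ ∞ C) (q u v : E) :
    fderiv ℝ (fderiv ℝ C) q u v = fderiv ℝ (fderiv ℝ C) q v u :=
  (hC.contDiffAt.isSymmSndFDerivAt hm_le2').eq u v

theorem hm_symT12 (C : E → E) (hC : ContDiff ℝ ∞ C) (q x u v : E) :
    fderiv ℝ (fderiv ℝ (fderiv ℝ C)) q x u v
      = fderiv ℝ (fderiv ℝ (fderiv ℝ C)) q u x v := by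
  have h := ((hC.fderiv_right hm_le).contDiffAt.isSymmSndFDerivAt (x := q) hm_le2').eq x u
  rw [h]

theorem hm_symT23 (C : E → E) (hC : ContDiff ℝ ∞ C) (q x u v : E) :
    fderiv ℝ (fderiv ℝ (fderiv ℝ C)) q x u v
      = fderiv ℝ (fderiv ℝ (fderiv ℝ C)) q x v u := by
  rw [← hm_evalT C hC u v q x, ← hm_evalT C hC v u q x]
  have : (fun r => fderiv ℝ (fderiv ℝ C) r u v) = (fun r => fderiv ℝ (fderiv ℝ C) r v u) :=
    funext fun r => hm_symB C hC r u v
  rw [this]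

theorem hm_dId (C : E → E) (hC : ContDiff ℝ ∞ C) (e : E → E) (he : ContDiff ℝ ∞ e)
    (hid : ∀ p v : E, fderiv ℝ (fderiv ℝ C) p (e p) v = v) (q x v : E) :
    fderiv ℝ (fderiv ℝ C) q (fderiv ℝ e q x) v
      = - fderiv ℝ (fderiv ℝ (fderiv ℝ C)) q x (e q) v := by
  have h := hm_prodRule C hC e (fun _ => v) q (he.differentiable hm_ne0 q)
    (differentiableAt_const v) x
  have hfun : (fun r => fderiv ℝ (fderiv ℝ C) r (e r) ((fun _ : E => v) r)) = fun _ => v :=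
    funext fun r => hid r v
  rw [hfun] at h
  simp only [fderiv_const, fderiv_fun_const, Pi.zero_apply, ContinuousLinearMap.zero_apply, map_zero,
    add_zero] at h
  exact eq_neg_of_add_eq_zero_left (by rw [add_comm]; exact h.symm)

theorem hm_De (C : E → E) (hC : ContDiff ℝ ∞ C) (e : E → E) (he : ContDiff ℝ ∞ e)
    (hid : ∀ p v : E, fderiv ℝ (fderiv ℝ C) p (e p) v = v) (q w : E) :
    fderiv ℝ e q w = - fderiv ℝ (fderiv ℝ (fderiv ℝ C)) q w (e q) (e q) := by
  calc fderiv ℝ e q w = fderiv ℝ (fderiv ℝ C) q (e q) (fderiv ℝ e q w) := (hid q _).symm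
    _ = fderiv ℝ (fderiv ℝ C) q (fderiv ℝ e q w) (e q) := hm_symB C hC q _ _
    _ = - fderiv ℝ (fderiv ℝ (fderiv ℝ C)) q w (e q) (e q) := hm_dId C hC e he hid q w (e q)

theorem hm_dAssoc (C : E → E) (hC : ContDiff ℝ ∞ C)
    (hassoc : ∀ p u v w : E,
      fderiv ℝ (fderiv ℝ C) p (fderiv ℝ (fderiv ℝ C) p u v) w
        = fderiv ℝ (fderiv ℝ C) p u (fderiv ℝ (fderiv ℝ C) p v w))
    (q x u v w : E) :
    fderiv ℝ (fderiv ℝ (fderiv ℝ C)) q x (fderiv ℝ (fderiv ℝ C) q u v) w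
      + fderiv ℝ (fderiv ℝ C) q (fderiv ℝ (fderiv ℝ (fderiv ℝ C)) q x u v) w
    = fderiv ℝ (fderiv ℝ (fderiv ℝ C)) q x u (fderiv ℝ (fderiv ℝ C) q v w)
      + fderiv ℝ (fderiv ℝ C) q u (fderiv ℝ (fderiv ℝ (fderiv ℝ C)) q x v w) := by
  have hB : ContDiff ℝ ∞ (fderiv ℝ (fderiv ℝ C)) :=
    (hC.fderiv_right hm_le).fderiv_right hm_le
  have hBd : Differentiable ℝ (fderiv ℝ (fderiv ℝ C)) := hB.differentiable hm_ne0
  have hX1 : DifferentiableAt ℝ (fun r => fderiv ℝ (fderiv ℝ C) r u v) q :=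
    ((hBd q).clm_apply (differentiableAt_const u)).clm_apply (differentiableAt_const v)
  have hX2 : DifferentiableAt ℝ (fun r => fderiv ℝ (fderiv ℝ C) r v w) q :=
    ((hBd q).clm_apply (differentiableAt_const v)).clm_apply (differentiableAt_const w)
  have h1 := hm_prodRule C hC (fun r => fderiv ℝ (fderiv ℝ C) r u v) (fun _ => w) q hX1
    (differentiableAt_const w) x
  have h2 := hm_prodRule C hC (fun _ => u) (fun r => fderiv ℝ (fderiv ℝ C) r v w) q
    (differentiableAt_const u) hX2 x
  have hfun : (fun r => fderiv ℝ (fderiv ℝ C) r ((fun r => fderiv ℝ (fderiv ℝ C) r u v) r)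
        ((fun _ : E => w) r))
      = (fun r => fderiv ℝ (fderiv ℝ C) r ((fun _ : E => u) r)
        ((fun r => fderiv ℝ (fderiv ℝ C) r v w) r)) :=
    funext fun r => hassoc r u v w
  rw [hfun] at h1
  rw [h2] at h1
  simp only [fderiv_const, fderiv_fun_const, Pi.zero_apply, ContinuousLinearMap.zero_apply, map_zero,
    add_zero, zero_add, hm_evalT C hC u v q x, hm_evalT C hC v w q x] at h1
  exact h1.symm

theorem hm_R (C : E → E) (hC : ContDiff ℝ ∞ C)
    (hassoc : ∀ p u v w : E,
      fderiv ℝ (fderiv ℝ C) p (fderiv ℝ (fderiv ℝ C) p u v) w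
        = fderiv ℝ (fderiv ℝ C) p u (fderiv ℝ (fderiv ℝ C) p v w))
    (e : E → E)
    (hid : ∀ p v : E, fderiv ℝ (fderiv ℝ C) p (e p) v = v) (q x y z : E) :
    fderiv ℝ (fderiv ℝ (fderiv ℝ C)) q x (fderiv ℝ (fderiv ℝ C) q y z) (e q)
      = fderiv ℝ (fderiv ℝ C) q y (fderiv ℝ (fderiv ℝ (fderiv ℝ C)) q x z (e q)) := by
  have h := hm_dAssoc C hC hassoc q x y z (e q)
  rw [hm_symB C hC q z (e q), hid q z,
    hm_symB C hC q (fderiv ℝ (fderiv ℝ (fderiv ℝ C)) q x y z) (e q), hid q _] at h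
  rw [add_comm] at h
  exact add_left_cancel h

theorem hm_R' (C : E → E) (hC : ContDiff ℝ ∞ C)
    (hassoc : ∀ p u v w : E,
      fderiv ℝ (fderiv ℝ C) p (fderiv ℝ (fderiv ℝ C) p u v) w
        = fderiv ℝ (fderiv ℝ C) p u (fderiv ℝ (fderiv ℝ C) p v w))
    (e : E → E)
    (hid : ∀ p v : E, fderiv ℝ (fderiv ℝ C) p (e p) v = v) (q x y : E) :
    fderiv ℝ (fderiv ℝ (fderiv ℝ C)) q x y (e q)
      = fderiv ℝ (fderiv ℝ C) q y (fderiv ℝ (fderiv ℝ (fderiv ℝ C)) q x (e q) (e q)) := by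
  have h := hm_R C hC hassoc e hid q x y (e q)
  rw [hm_symB C hC q y (e q), hid q y] at h
  exact h

theorem hm_key (C : E → E) (hC : ContDiff ℝ ∞ C)
    (hassoc : ∀ p u v w : E,
      fderiv ℝ (fderiv ℝ C) p (fderiv ℝ (fderiv ℝ C) p u v) w
        = fderiv ℝ (fderiv ℝ C) p u (fderiv ℝ (fderiv ℝ C) p v w))
    (e : E → E)
    (hid : ∀ p v : E, fderiv ℝ (fderiv ℝ C) p (e p) v = v) (q y z : E) :
    fderiv ℝ (fderiv ℝ (fderiv ℝ C)) q (fderiv ℝ (fderiv ℝ C) q y z) (e q) (e q)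
      = fderiv ℝ (fderiv ℝ (fderiv ℝ C)) q (e q) y z := by
  have l1 : fderiv ℝ (fderiv ℝ (fderiv ℝ C)) q (fderiv ℝ (fderiv ℝ C) q y z) (e q) (e q)
      = fderiv ℝ (fderiv ℝ C) q y (fderiv ℝ (fderiv ℝ C) q z
          (fderiv ℝ (fderiv ℝ (fderiv ℝ C)) q (e q) (e q) (e q))) := by
    rw [hm_symT12 C hC q (fderiv ℝ (fderiv ℝ C) q y z) (e q) (e q),
      hm_R C hC hassoc e hid q (e q) y z,
      hm_R' C hC hassoc e hid q (e q) z]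
  have l2 : fderiv ℝ (fderiv ℝ (fderiv ℝ C)) q (e q) y z
      = fderiv ℝ (fderiv ℝ C) q z (fderiv ℝ (fderiv ℝ C) q y
          (fderiv ℝ (fderiv ℝ (fderiv ℝ C)) q (e q) (e q) (e q))) := by
    rw [hm_symT12 C hC q (e q) y z, hm_symT23 C hC q y (e q) z,
      hm_R' C hC hassoc e hid q y z, hm_symT12 C hC q y (e q) (e q),
      hm_R' C hC hassoc e hid q (e q) y]
  rw [l1, l2, ← hassoc q y z _, ← hassoc q z y _, hm_symB C hC q z y]

end HMAux

/-- `ad e` is a `∘`-derivation. -/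
theorem stmt11 {E : Type*} [NormedAddCommGroup E] [NormedSpace ℝ E] [FiniteDimensional ℝ E]
    (C : E → E) (hC : ContDiff ℝ ∞ C)
    (hassoc : ∀ p u v w : E,
      fderiv ℝ (fderiv ℝ C) p (fderiv ℝ (fderiv ℝ C) p u v) w
        = fderiv ℝ (fderiv ℝ C) p u (fderiv ℝ (fderiv ℝ C) p v w))
    (e : E → E) (he : ContDiff ℝ ∞ e)
    (hid : ∀ p v : E, fderiv ℝ (fderiv ℝ C) p (e p) v = v) :
    ∀ Y Z : E → E, ContDiff ℝ ∞ Y → ContDiff ℝ ∞ Z →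
      lieB e (mulC C Y Z)
        = fun p => mulC C (lieB e Y) Z p + mulC C Y (lieB e Z) p := by
  intro Y Z hY hZ
  funext p
  simp only [lieB, mulC]
  rw [show (mulC C Y Z) = (fun q => fderiv ℝ (fderiv ℝ C) q (Y q) (Z q)) from rfl]
  rw [hm_prodRule C hC Y Z p (hY.differentiable hm_ne0 p) (hZ.differentiable hm_ne0 p) (e p)]
  simp only [map_sub, ContinuousLinearMap.sub_apply]
  rw [hm_De C hC e he hid p (fderiv ℝ (fderiv ℝ C) p (Y p) (Z p))]
  rw [hm_dId C hC e he hid p (Y p) (Z p)]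
  rw [hm_symB C hC p (Y p) (fderiv ℝ e p (Z p)), hm_dId C hC e he hid p (Z p) (Y p)]
  rw [hm_key C hC hassoc e hid p (Y p) (Z p)]
  rw [show fderiv ℝ (fderiv ℝ (fderiv ℝ C)) p (Y p) (e p) (Z p)
      = fderiv ℝ (fderiv ℝ (fderiv ℝ C)) p (e p) (Y p) (Z p) from
    (hm_symT12 C hC p (e p) (Y p) (Z p)).symm]
  rw [show fderiv ℝ (fderiv ℝ (fderiv ℝ C)) p (Z p) (e p) (Y p)
      = fderiv ℝ (fderiv ℝ (fderiv ℝ C)) p (e p) (Y p) (Z p) from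
    (hm_symT12 C hC p (e p) (Z p) (Y p)).symm.trans (hm_symT23 C hC p (e p) (Z p) (Y p))]
  abel
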